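/- Let P ∈ ℚ[X₀,…,X_{n−1}] have degree at most 2 in each variable. If there exists an integer N such that for all integers k₀,…,k_{n−1} ≥ N the value P(k₀,…,k_{n−1}) is the square of a rational number, then there exists Q ∈ ℚ[X₀,…,X_{n−1}] with P = Q². -/
import Mathlib


open MvPolynomial


lemma rat_sq_int (q : ℚ) (m : ℤ) (hm : (m:ℚ) = q ^ 2) : ∃ s : ℤ, m = s ^ 2 := by
  have hden : q.den = 1 := by
    have h1 : ((m:ℚ)).den = 1 := Rat.den_intCast m
    rw [hm, Rat.den_pow] at h1
    nlinarith [q.pos, h1, sq_nonneg (q.den - 1)]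
  have hq : (q.num : ℚ) = q := by
    conv_rhs => rw [← Rat.num_div_den q]
    rw [hden]; simp
  refine ⟨q.num, ?_⟩
  have : (m:ℚ) = ((q.num ^ 2 : ℤ) : ℚ) := by push_cast; rw [hq, hm]
  exact_mod_cast this


private lemma sq_lemma_neg (A B C K s : ℤ) (hA : A < 0) (h1 : |B| + |C| + 1 ≤ K)
    (hs : A * K ^ 2 + B * K + C = s ^ 2) : False := by
  have hK1 : (1:ℤ) ≤ K := by have := abs_nonneg B; have := abs_nonneg C; omega
  have hK0 : (0:ℤ) ≤ K := by linarith
  nlinarith [sq_nonneg s, le_abs_self C, abs_nonneg C, abs_nonneg B, hK1,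
    mul_le_mul_of_nonneg_right h1 hK0,
    mul_nonneg (sub_nonneg.mpr (le_abs_self B)) hK0,
    mul_nonneg (by linarith : (0:ℤ) ≤ -A - 1) (sq_nonneg K),
    mul_nonneg (abs_nonneg C) (by linarith [abs_nonneg B, abs_nonneg C] : (0:ℤ) ≤ K - 1)]

private lemma sq_lemma_linneg (B C K s : ℤ) (hB : B < 0) (h1 : |C| + 1 ≤ K)
    (hs : B * K + C = s ^ 2) : False := by
  have hK0 : (0:ℤ) ≤ K := by have := abs_nonneg C; omega
  nlinarith [sq_nonneg s, le_abs_self C,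
    mul_le_mul_of_nonneg_right (by linarith : B ≤ -1) hK0]

private lemma sq_lemma_linpos (B C K s t : ℤ) (hB : 0 < B) (h1 : |C| + B + 1 ≤ K)
    (hs : B * K + C = s ^ 2) (ht : B * (K + 1) + C = t ^ 2)
    (hsnn : 0 ≤ s) (htnn : 0 ≤ t) : False := by
  have hs2 : B ^ 2 + 1 ≤ s ^ 2 := by
    nlinarith [mul_le_mul_of_nonneg_left h1 hB.le,
      mul_nonneg (by linarith : (0:ℤ) ≤ B - 1) (abs_nonneg C), neg_abs_le C]
  have hsB : B < s := by
    by_contra hc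
    push_neg at hc
    nlinarith [mul_le_mul hc hc hsnn hB.le]
  have hts : s < t := by
    refine lt_of_pow_lt_pow_left₀ 2 htnn ?_
    linarith
  have h5 : (s + 1) ^ 2 ≤ t ^ 2 := pow_le_pow_left₀ (by omega) (by omega) 2
  nlinarith [h5]

private lemma sq_lemma_G (A B C Δ K F : ℤ) (hA1 : 1 ≤ A)
    (h1 : 3 * (A + |B| + |C| + |Δ|) + 10 ≤ K) (hFub : F ≤ 2 * A * K + B) :
    K ≤ 4 * A * K ^ 2 + 4 * (A + B) * K + 4 * C + 2 * B - F := by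
  have hBnn := abs_nonneg B; have hCnn := abs_nonneg C; have hΔnn := abs_nonneg Δ
  have hK0 : (0:ℤ) ≤ K := by linarith
  nlinarith [neg_abs_le B, neg_abs_le C, le_abs_self B,
    mul_nonneg (by linarith : (0:ℤ) ≤ A - 1) (sq_nonneg K),
    mul_nonneg (by linarith : (0:ℤ) ≤ K - 3 * |B|) hK0,
    mul_nonneg (by linarith [neg_abs_le B] : (0:ℤ) ≤ |B| + B) hK0,
    mul_nonneg (by linarith : (0:ℤ) ≤ A) hK0]

private lemma sq_lemma_final (Δ K F G : ℤ) (hfg : F * G = Δ) (h1F : 1 ≤ |F|)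
    (hG : K ≤ G) (hKΔ : |Δ| < K) : False := by
  have habs : |Δ| = |F| * |G| := by rw [← hfg, abs_mul]
  have hGnn : 0 ≤ G := le_trans (le_trans (abs_nonneg Δ) hKΔ.le) hG
  rw [abs_of_nonneg hGnn] at habs
  have h2 : 1 * G ≤ |F| * G := mul_le_mul_of_nonneg_right h1F hGnn
  linarith

lemma int_quad_sq (A B C N : ℤ)
    (h : ∀ k : ℤ, N ≤ k → ∃ s : ℤ, A * k ^ 2 + B * k + C = s ^ 2) :
    ∃ e m : ℤ, A = e ^ 2 ∧ B = 2 * e * m ∧ C = m ^ 2 := by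
  rcases lt_trichotomy A 0 with hA | hA | hA
  · exfalso
    obtain ⟨s, hs⟩ := h (max N (|B| + |C| + 1)) (le_max_left _ _)
    exact sq_lemma_neg A B C _ s hA (le_max_right _ _) hs
  · rcases lt_trichotomy B 0 with hB | hB | hB
    · exfalso
      obtain ⟨s, hs⟩ := h (max N (|C| + 1)) (le_max_left _ _)
      rw [hA] at hs
      exact sq_lemma_linneg B C _ s hB (le_max_right _ _) (by linarith [hs])
    · obtain ⟨s, hs⟩ := h N le_rfl
      rw [hA, hB] at hs
      refine ⟨0, |s|, by rw [hA]; ring, by rw [hB]; ring, ?_⟩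
      rw [sq_abs]; linarith [hs]
    · exfalso
      set K : ℤ := max N (|C| + B + 1) with hK
      obtain ⟨s₀, hs₀⟩ := h K (le_max_left _ _)
      obtain ⟨t₀, ht₀⟩ := h (K + 1) (by have := le_max_left N (|C| + B + 1); omega)
      rw [hA] at hs₀ ht₀
      refine sq_lemma_linpos B C K |s₀| |t₀| hB (le_max_right _ _) ?_ ?_
        (abs_nonneg _) (abs_nonneg _)
      · rw [sq_abs]; linarith [hs₀]
      · rw [sq_abs]; linarith [ht₀]
  · -- A > 0
    set Δ : ℤ := B ^ 2 - 4 * A * C with hΔ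
    set K : ℤ := max N (3 * (A + |B| + |C| + |Δ|) + 10) with hK
    obtain ⟨s₀, hs₀⟩ := h K (le_max_left _ _)
    obtain ⟨t₀, ht₀⟩ := h (K + 1)
      (by have := le_max_left N (3 * (A + |B| + |C| + |Δ|) + 10); omega)
    have h1 : 3 * (A + |B| + |C| + |Δ|) + 10 ≤ K := le_max_right _ _
    clear hK
    have hBnn := abs_nonneg B; have hCnn := abs_nonneg C; have hΔnn := abs_nonneg Δ
    have hA1 : (1:ℤ) ≤ A := hA
    have hKpos : (10:ℤ) ≤ K := by linarith
    set s := |s₀| with hsd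
    set t := |t₀| with htd
    have hs : A * K ^ 2 + B * K + C = s ^ 2 := by rw [hsd, sq_abs]; exact hs₀
    have ht : A * (K + 1) ^ 2 + B * (K + 1) + C = t ^ 2 := by rw [htd, sq_abs]; exact ht₀
    clear hs₀ ht₀ h
    have hsnn : 0 ≤ s := abs_nonneg _
    have htnn : 0 ≤ t := abs_nonneg _
    have hD : t ^ 2 - s ^ 2 = 2 * A * K + A + B := by linear_combination hs - ht
    have hKA : K ≤ A * K := le_mul_of_one_le_left (by linarith) hA1
    have hDpos : 0 < 2 * A * K + A + B := by linarith [neg_abs_le B]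
    have hts : s < t := by
      refine lt_of_pow_lt_pow_left₀ 2 htnn ?_
      linarith
    set c : ℤ := t - s with hc
    have hc1 : 1 ≤ c := by omega
    have hkey : 2 * c * s + c ^ 2 = 2 * A * K + A + B := by
      rw [hc]; linear_combination hs - ht
    have hmain : (2 * A * K + A + B - c ^ 2) ^ 2 = 4 * c ^ 2 * (A * K ^ 2 + B * K + C) := by
      have h2cs : 2 * c * s = 2 * A * K + A + B - c ^ 2 := by linarith
      calc (2 * A * K + A + B - c ^ 2) ^ 2 = (2 * c * s) ^ 2 := by rw [h2cs]
        _ = 4 * c ^ 2 * s ^ 2 := by ring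
        _ = 4 * c ^ 2 * (A * K ^ 2 + B * K + C) := by rw [hs]
    set F : ℤ := c ^ 2 - A with hF
    have hFG : F * (4 * A * K ^ 2 + 4 * (A + B) * K + 4 * C + 2 * B - F) = Δ := by
      rw [hF, hΔ]; linear_combination -hmain
    have hcs : 0 ≤ 2 * c * s :=
      mul_nonneg (mul_nonneg (by norm_num) (by omega)) hsnn
    have hFub : F ≤ 2 * A * K + B := by rw [hF]; linarith
    have hF0 : F = 0 := by
      by_contra hne
      refine sq_lemma_final Δ K F _ hFG (Int.one_le_abs hne)
        (sq_lemma_G A B C Δ K F hA1 h1 hFub) (by linarith [le_abs_self Δ])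
    have hAc : A = c ^ 2 := by omega
    have hΔ0 : Δ = 0 := by rw [← hFG, hF0]; ring
    have hB2 : B = 2 * c * (s - c * K) := by
      have h2 : 2 * c * s + c ^ 2 = 2 * c ^ 2 * K + c ^ 2 + B := by
        rw [← hAc]; linarith [hkey]
      linarith [h2]
    refine ⟨c, s - c * K, hAc, hB2, ?_⟩
    have hq : B ^ 2 - 4 * A * C = 0 := by rw [← hΔ]; exact hΔ0
    rw [hAc, hB2] at hq
    have hcne : (c:ℤ) ≠ 0 := by omega
    have h4 : 4 * c ^ 2 * C = 4 * c ^ 2 * ((s - c * K) ^ 2) := by linear_combination -hq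
    have := mul_left_cancel₀ (by positivity : (4:ℤ) * c ^ 2 ≠ 0) h4
    linarith [this]


lemma rat_quad_sq (a b c : ℚ) (N : ℤ)
    (h : ∀ k : ℤ, N ≤ k → ∃ r : ℚ, a * k ^ 2 + b * k + c = r ^ 2) :
    ∃ u v : ℚ, a = u ^ 2 ∧ b = 2 * u * v ∧ c = v ^ 2 := by
  set d : ℤ := (a.den : ℤ) * b.den * c.den with hd
  have hdpos : 0 < d := by positivity
  have hdQ : ((d:ℤ):ℚ) ≠ 0 := by exact_mod_cast hdpos.ne'
  have hanum : (a.num : ℚ) = a * a.den := (Rat.mul_den_eq_num a).symm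
  have hbnum : (b.num : ℚ) = b * b.den := (Rat.mul_den_eq_num b).symm
  have hcnum : (c.num : ℚ) = c * c.den := (Rat.mul_den_eq_num c).symm
  set A : ℤ := a.num * ((b.den : ℤ) * c.den) * d with hA
  set B : ℤ := b.num * ((a.den : ℤ) * c.den) * d with hB
  set C : ℤ := c.num * ((a.den : ℤ) * b.den) * d with hC
  have hAq : ((A:ℤ):ℚ) = a * d ^ 2 := by
    rw [hA, hd]; push_cast; rw [hanum]; ring
  have hBq : ((B:ℤ):ℚ) = b * d ^ 2 := by
    rw [hB, hd]; push_cast; rw [hbnum]; ring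
  have hCq : ((C:ℤ):ℚ) = c * d ^ 2 := by
    rw [hC, hd]; push_cast; rw [hcnum]; ring
  have hint : ∀ k : ℤ, N ≤ k → ∃ s : ℤ, A * k ^ 2 + B * k + C = s ^ 2 := by
    intro k hk
    obtain ⟨r, hr⟩ := h k hk
    refine rat_sq_int (d * r) _ ?_
    push_cast
    rw [hAq, hBq, hCq]
    calc a * (d:ℚ) ^ 2 * (k:ℚ) ^ 2 + b * (d:ℚ) ^ 2 * k + c * (d:ℚ) ^ 2
        = (a * k ^ 2 + b * k + c) * (d:ℚ) ^ 2 := by ring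
      _ = ((d:ℚ) * r) ^ 2 := by rw [hr]; ring
  obtain ⟨e, m, hAe, hBe, hCe⟩ := int_quad_sq A B C N hint
  have hd2 : ((d:ℤ):ℚ) ^ 2 ≠ 0 := pow_ne_zero _ hdQ
  have ha2 : a * (d:ℚ) ^ 2 = (e:ℚ) ^ 2 := by
    rw [← hAq, hAe]; push_cast; ring
  have hb2 : b * (d:ℚ) ^ 2 = 2 * (e:ℚ) * (m:ℚ) := by
    rw [← hBq, hBe]; push_cast; ring
  have hc2 : c * (d:ℚ) ^ 2 = (m:ℚ) ^ 2 := by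
    rw [← hCq, hCe]; push_cast; ring
  refine ⟨(e:ℚ)/(d:ℚ), (m:ℚ)/(d:ℚ), ?_, ?_, ?_⟩
  · field_simp
    linear_combination ha2
  · field_simp
    linear_combination hb2
  · field_simp
    linear_combination hc2



private lemma cons_cast (n : ℕ) (k₀ : ℤ) (κ : Fin n → ℤ) :
    (fun i => ((Fin.cons k₀ κ : Fin (n+1) → ℤ) i : ℚ))
      = (Fin.cons (k₀:ℚ) (fun i => (κ i : ℚ)) : Fin (n+1) → ℚ) := by
  funext i
  refine Fin.cases ?_ (fun j => ?_) i <;> simp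

private lemma vanish_of_lattice_zero (N : ℤ) : ∀ (n : ℕ) (P : MvPolynomial (Fin n) ℚ),
    (∀ k : Fin n → ℤ, (∀ i, N ≤ k i) → eval (fun i => (k i : ℚ)) P = 0) → P = 0 := by
  intro n
  induction n with
  | zero =>
    intro P h
    obtain ⟨q, rfl⟩ := C_surjective (Fin 0) P
    have := h (fun i => N) (fun i => i.elim0)
    simpa using this
  | succ n IH =>
    intro P h
    have hcoeff : ∀ i : ℕ, (finSuccEquiv ℚ n P).coeff i = 0 := by
      intro i
      apply IH
      intro κ hκ
      have hmap : Polynomial.map (eval (fun i => (κ i : ℚ))) (finSuccEquiv ℚ n P) = 0 := by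
        apply Polynomial.eq_zero_of_infinite_isRoot
        apply Set.Infinite.mono (s := (fun k : ℤ => (k:ℚ)) '' Set.Ici N)
        · rintro x ⟨k, hk, rfl⟩
          have := h (Fin.cons k κ) (fun i => Fin.cases hk (fun j => hκ j) i)
          rw [cons_cast, eval_eq_eval_mv_eval'] at this
          exact this
        · exact (Set.Ici_infinite N).image (fun a _ b _ hab => by exact_mod_cast hab)
      have := congrArg (fun q => Polynomial.coeff q i) hmap
      simpa [Polynomial.coeff_map] using this
    have hp0 : finSuccEquiv ℚ n P = 0 := Polynomial.ext fun i => by simp [hcoeff i]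
    have := congrArg (finSuccEquiv ℚ n).symm hp0
    simpa using this

private lemma poly_eq_quad (p : Polynomial (MvPolynomial (Fin n) ℚ)) (h : p.natDegree ≤ 2) :
    p = Polynomial.C (p.coeff 2) * Polynomial.X ^ 2 + Polynomial.C (p.coeff 1) * Polynomial.X
      + Polynomial.C (p.coeff 0) := by
  refine Polynomial.ext fun i => ?_
  rcases i with _ | _ | _ | i
  · simp [Polynomial.coeff_add, Polynomial.coeff_C_mul, Polynomial.coeff_X_pow,
      Polynomial.coeff_C, Polynomial.coeff_X]
  · simp [Polynomial.coeff_add, Polynomial.coeff_C_mul, Polynomial.coeff_X_pow,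
      Polynomial.coeff_C, Polynomial.coeff_X]
  · simp [Polynomial.coeff_add, Polynomial.coeff_C_mul, Polynomial.coeff_X_pow,
      Polynomial.coeff_C, Polynomial.coeff_X]
  · rw [Polynomial.coeff_eq_zero_of_natDegree_lt (by omega : p.natDegree < i + 1 + 1 + 1)]
    simp [Polynomial.coeff_add, Polynomial.coeff_C_mul, Polynomial.coeff_X_pow,
      Polynomial.coeff_C, Polynomial.coeff_X]

/-- Let `P ∈ ℚ[X₀,…,X_{n-1}]` have degree at most `2` in each variable.
If there is an integer `N` such that `P(k₀,…,k_{n-1})` is a square of a rational for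
all integers `k₀,…,k_{n-1} ≥ N`, then `P = Q²` for some polynomial `Q`. -/
theorem exists_sq_of_eventually_square_values
    (n : ℕ) (P : MvPolynomial (Fin n) ℚ)
    (hdeg : ∀ i, degreeOf i P ≤ 2)
    (N : ℤ)
    (h : ∀ k : Fin n → ℤ, (∀ i, N ≤ k i) →
      ∃ r : ℚ, eval (fun i => (k i : ℚ)) P = r ^ 2) :
    ∃ Q : MvPolynomial (Fin n) ℚ, P = Q ^ 2 := by
  induction n with
  | zero =>
    obtain ⟨q, rfl⟩ := C_surjective (Fin 0) P
    obtain ⟨r, hr⟩ := h (fun _ => N) (fun i => le_rfl)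
    refine ⟨MvPolynomial.C r, ?_⟩
    rw [← map_pow]
    congr 1
    simpa using hr
  | succ n IH =>
    set p := finSuccEquiv ℚ n P with hpdef
    have hpdeg : p.natDegree ≤ 2 := by
      rw [hpdef, natDegree_finSuccEquiv]; exact hdeg 0
    set A := p.coeff 2 with hAdef
    set Bp := p.coeff 1 with hBdef
    set Cp := p.coeff 0 with hCdef
    have hp : p = Polynomial.C A * Polynomial.X ^ 2 + Polynomial.C Bp * Polynomial.X
        + Polynomial.C Cp := poly_eq_quad p hpdeg
    have heval : ∀ (k₀ : ℤ) (κ : Fin n → ℤ),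
        eval (fun i => ((Fin.cons k₀ κ : Fin (n+1) → ℤ) i : ℚ)) P
          = (eval (fun i => (κ i : ℚ)) A) * (k₀:ℚ) ^ 2
            + (eval (fun i => (κ i : ℚ)) Bp) * (k₀:ℚ)
            + (eval (fun i => (κ i : ℚ)) Cp) := by
      intro k₀ κ
      rw [cons_cast, eval_eq_eval_mv_eval', ← hpdef, hp]
      simp only [Polynomial.map_add, Polynomial.map_mul, Polynomial.map_pow,
        Polynomial.map_C, Polynomial.map_X, Polynomial.eval_add, Polynomial.eval_mul,
        Polynomial.eval_pow, Polynomial.eval_C, Polynomial.eval_X]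
    -- for each lattice point κ, get the square structure
    have hkey : ∀ κ : Fin n → ℤ, (∀ i, N ≤ κ i) →
        ∃ u v : ℚ, eval (fun i => (κ i : ℚ)) A = u ^ 2
          ∧ eval (fun i => (κ i : ℚ)) Bp = 2 * u * v
          ∧ eval (fun i => (κ i : ℚ)) Cp = v ^ 2 := by
      intro κ hκ
      apply rat_quad_sq _ _ _ N
      intro k₀ hk₀
      obtain ⟨r, hr⟩ := h (Fin.cons k₀ κ) (fun i => Fin.cases hk₀ (fun j => hκ j) i)
      exact ⟨r, by rw [← heval k₀ κ]; exact hr⟩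
    -- A is a square polynomial by induction
    have hAdeg : ∀ i, degreeOf i A ≤ 2 := by
      intro i
      exact le_trans (degreeOf_coeff_finSuccEquiv P i 2) (hdeg i.succ)
    obtain ⟨D, hD⟩ := IH A hAdeg (by
      intro κ hκ
      obtain ⟨u, v, hu, _, _⟩ := hkey κ hκ
      exact ⟨u, hu⟩)
    -- the discriminant vanishes
    have hdisc : Bp ^ 2 - 4 * A * Cp = 0 := by
      apply vanish_of_lattice_zero N
      intro κ hκ
      obtain ⟨u, v, hu, hv, hw⟩ := hkey κ hκ
      simp only [map_sub, map_mul, map_pow, map_ofNat]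
      rw [hu, hv, hw]
      ring
    by_cases hD0 : D = 0
    · -- A = 0, hence Bp = 0 and P = C Cp
      have hA0 : A = 0 := by rw [hD, hD0]; ring
      have hB0 : Bp = 0 := by
        have : Bp ^ 2 = 0 := by rw [← hdisc, hA0]; ring
        exact pow_eq_zero_iff (by norm_num) |>.mp this
      have hCdeg : ∀ i, degreeOf i Cp ≤ 2 := fun i =>
        le_trans (degreeOf_coeff_finSuccEquiv P i 0) (hdeg i.succ)
      obtain ⟨Q₀, hQ₀⟩ := IH Cp hCdeg (by
        intro κ hκ
        obtain ⟨u, v, _, _, hw⟩ := hkey κ hκ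
        exact ⟨v, hw⟩)
      refine ⟨(finSuccEquiv ℚ n).symm (Polynomial.C Q₀), ?_⟩
      have hPp : P = (finSuccEquiv ℚ n).symm p := by
        rw [hpdef]; exact ((finSuccEquiv ℚ n).symm_apply_apply P).symm
      rw [hPp, ← map_pow, ← Polynomial.C_pow, ← hQ₀, hp, hA0, hB0]
      norm_num
    · -- A = D^2 with D ≠ 0
      have h2D : (2 : MvPolynomial (Fin n) ℚ) * D ≠ 0 := mul_ne_zero two_ne_zero hD0
      have hdvd : 2 * D ∣ Bp := by
        refine (IsIntegrallyClosed.pow_dvd_pow_iff two_ne_zero).mp ⟨Cp, ?_⟩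
        linear_combination hdisc + 4 * Cp * hD
      obtain ⟨E, hE⟩ := hdvd
      have hCp : Cp = E ^ 2 := by
        have h4 : (2 * D) ^ 2 * Cp = (2 * D) ^ 2 * E ^ 2 := by
          linear_combination (-1 : MvPolynomial (Fin n) ℚ) * hdisc - 4 * Cp * hD
            + (Bp + 2 * D * E) * hE
        exact mul_left_cancel₀ (pow_ne_zero 2 h2D) h4
      refine ⟨(finSuccEquiv ℚ n).symm (Polynomial.C D * Polynomial.X + Polynomial.C E), ?_⟩
      have hPp : P = (finSuccEquiv ℚ n).symm p := by
        rw [hpdef]; exact ((finSuccEquiv ℚ n).symm_apply_apply P).symm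
      rw [hPp, ← map_pow]
      congr 1
      rw [hp, hD, hE, hCp]
      simp only [map_pow, map_mul, map_ofNat, map_add]
      ring
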